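/- Let E_{B|A}, E_{C|B}, E_{C|A} be linear maps between operator spaces of finite-dimensional Hilbert spaces with Jamiołkowski operators ϱ_{B|A}, ϱ_{C|B}, ϱ_{C|A} (the partial transposes over the input space of the Choi operators). Then E_{C|A} = E_{C|B} ∘ E_{B|A} if and only if ϱ_{C|A} = Tr_B[(I_A ⊗ ϱ_{C|B})(ϱ_{B|A} ⊗ I_C)]. -/

import Mathlib

open Matrix

noncomputable section

/-- The Jamiołkowski operator of a linear map `E : L(H_A) → L(H_B)`: the partial
transpose over the input space of the Choi operator, so that
`E(M) = Tr_A[ϱ (M ⊗ I_B)]`. -/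
def jam {A B : Type*} [DecidableEq A]
    (E : Matrix A A ℂ →ₗ[ℂ] Matrix B B ℂ) : Matrix (A × B) (A × B) ℂ :=
  Matrix.of fun p q => E (Matrix.single q.1 p.1 1) p.2 q.2


lemma expandE {A B : Type*} [Fintype A] [DecidableEq A]
    (E : Matrix A A ℂ →ₗ[ℂ] Matrix B B ℂ) (M : Matrix A A ℂ) :
    E M = ∑ i, ∑ j, M i j • E (single i j 1) := by
  conv_lhs => rw [matrix_eq_sum_single M]
  rw [map_sum]
  refine Finset.sum_congr rfl fun i _ => ?_
  rw [map_sum]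
  refine Finset.sum_congr rfl fun j _ => ?_
  rw [show single i j (M i j) = M i j • single i j 1 by
    rw [smul_single, smul_eq_mul, mul_one], _root_.map_smul]

lemma key {A B C : Type*}
    [Fintype A] [Fintype B] [Fintype C]
    [DecidableEq A] [DecidableEq B] [DecidableEq C]
    (EBA : Matrix A A ℂ →ₗ[ℂ] Matrix B B ℂ)
    (ECB : Matrix B B ℂ →ₗ[ℂ] Matrix C C ℂ)
    (a a' : A) (c c' : C) :
    (∑ b : B,
            ((Matrix.of fun u v : A × B × C =>
                (if u.1 = v.1 then (1 : ℂ) else 0) * jam ECB (u.2.1, u.2.2) (v.2.1, v.2.2)) *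
             (Matrix.of fun u v : A × B × C =>
                jam EBA (u.1, u.2.1) (v.1, v.2.1) * (if u.2.2 = v.2.2 then (1 : ℂ) else 0)))
              (a, b, c) (a', b, c')) = ECB (EBA (single a' a 1)) c c' := by
  rw [expandE ECB (EBA (single a' a 1))]
  simp only [Matrix.mul_apply, jam, Matrix.of_apply, Fintype.sum_prod_type,
    ite_mul, mul_ite, one_mul, mul_one, zero_mul, mul_zero,
    Finset.sum_ite_eq, Finset.sum_ite_eq', Finset.mem_univ, if_true,
    Matrix.sum_apply, Matrix.smul_apply, smul_eq_mul]
  conv_lhs => enter [2, b]; rw [Finset.sum_comm]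
  simp only [Finset.sum_ite_eq, Finset.mem_univ, if_true]
  rw [Finset.sum_comm]
  exact Finset.sum_congr rfl fun b _ => Finset.sum_congr rfl fun y _ => mul_comm _ _

/-- `E_{C|A} = E_{C|B} ∘ E_{B|A}` iff the Jamiołkowski operators satisfy
`ϱ_{C|A} = Tr_B[(I_A ⊗ ϱ_{C|B})(ϱ_{B|A} ⊗ I_C)]`. -/
theorem jam_composition {A B C : Type*}
    [Fintype A] [Fintype B] [Fintype C]
    [DecidableEq A] [DecidableEq B] [DecidableEq C]
    (EBA : Matrix A A ℂ →ₗ[ℂ] Matrix B B ℂ)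
    (ECB : Matrix B B ℂ →ₗ[ℂ] Matrix C C ℂ)
    (ECA : Matrix A A ℂ →ₗ[ℂ] Matrix C C ℂ) :
    ECA = ECB.comp EBA ↔
      jam ECA =
        Matrix.of (fun p q : A × C =>
          ∑ b : B,
            ((Matrix.of fun u v : A × B × C =>
                (if u.1 = v.1 then (1 : ℂ) else 0) * jam ECB (u.2.1, u.2.2) (v.2.1, v.2.2)) *
             (Matrix.of fun u v : A × B × C =>
                jam EBA (u.1, u.2.1) (v.1, v.2.1) * (if u.2.2 = v.2.2 then (1 : ℂ) else 0)))
              (p.1, b, p.2) (q.1, b, q.2)) := by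

  constructor
  · intro h
    subst h
    ext ⟨a, c⟩ ⟨a', c'⟩
    rw [Matrix.of_apply, key EBA ECB a a' c c']
    rfl
  · intro h
    have hstd : ∀ (a a' : A), ECA (single a' a 1) =
        ECB (EBA (single a' a 1)) := by
      intro a a'
      ext c c'
      have := congrFun (congrFun h (a, c)) (a', c')
      rw [Matrix.of_apply, key EBA ECB a a' c c'] at this
      exact this
    ext M : 1
    rw [LinearMap.comp_apply, expandE ECA M, expandE EBA M, map_sum]
    refine Finset.sum_congr rfl fun i _ => ?_
    rw [map_sum]
    refine Finset.sum_congr rfl fun j _ => ?_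
    rw [_root_.map_smul, hstd j i]
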